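/- Let E be a reproducing kernel Hilbert C*-module over a C*-algebra A on a set S with reproducing kernel K, let g : S → A be a function, and suppose the closed submodule E_0 := { h ∈ E : g·h = 0 } is orthogonally complemented in E. Then E_g := { g·h : h ∈ E } is a reproducing kernel Hilbert C*-module on S with the inner product ⟨g·h_1, g·h_2⟩ := ⟨h_1, h_2⟩ for h_1, h_2 ∈ E_0^⊥, its kernel element at s ∈ S is g·k_s·g(s)*, and its reproducing kernel is K'(s,t) = g(s) K(s,t) g(t)*. -/

import Mathlib

open scoped RightActions

/-- The Hilbert C*-module class as Mathlib defined it in December 2024 (right `A`-action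
via `Aᵐᵒᵖ`, inner product `A`-linear on the right); Mathlib's `CStarModule` now uses a left
action and a different linearity convention. -/
class RightCStarModule (A : outParam <| Type*) (E : Type*) [NonUnitalSemiring A] [StarRing A]
    [Module ℂ A] [AddCommGroup E] [Module ℂ E] [PartialOrder A] [SMul Aᵐᵒᵖ E] [Norm A] [Norm E]
    extends Inner A E where
  inner_add_right {x} {y} {z} : inner x (y + z) = inner x y + inner x z
  inner_self_nonneg {x} : 0 ≤ inner x x
  inner_self {x} : inner x x = 0 ↔ x = 0
  inner_op_smul_right {a : A} {x y : E} : inner x (y <• a) = inner x y * a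
  inner_smul_right_complex {z : ℂ} {x} {y} : inner x (z • y) = z • inner x y
  star_inner x y : star (inner x y) = inner y x
  norm_eq_sqrt_norm_inner_self x : ‖x‖ = Real.sqrt ‖inner x x‖

/-- A *reproducing kernel Hilbert C*-module* (RKHC*M) over the C*-algebra `A` on the set `S`:
a Hilbert C*-module `E` over `A` realized (injectively) as a right `A`-submodule of the
`A`-valued functions on `S` via `toFun`, together with kernel elements `k s` such that
evaluation at `s` is given by `f ↦ ⟪k s, f⟫`, and such that the `A`-linear span of the
`k s` is dense in `E`. -/
structure RKHCM (A : Type*) (S : Type*) (E : Type*)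
    [CStarAlgebra A] [PartialOrder A] [StarOrderedRing A]
    [NormedAddCommGroup E] [NormedSpace ℂ E] [SMul Aᵐᵒᵖ E] [RightCStarModule A E] where
  toFun : E → S → A
  injective : Function.Injective toFun
  k : S → E
  eval_eq : ∀ (f : E) (s : S), toFun f s = inner A (k s) f
  dense_span : Dense
    ((Submodule.span ℂ (Set.range fun p : S × A => k p.1 <• p.2) : Submodule ℂ E) : Set E)

namespace RightCStarModule

theorem inner_add_left {A E : Type*} [CStarAlgebra A] [PartialOrder A] [NormedAddCommGroup E]
    [NormedSpace ℂ E] [SMul Aᵐᵒᵖ E] [RightCStarModule A E] {x y z : E} :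
    inner A (x + y) z = inner A x z + inner A y z := by
  rw [← star_inner z (x + y), inner_add_right, star_add, star_inner, star_inner]

theorem inner_zero_right {A E : Type*} [CStarAlgebra A] [PartialOrder A] [NormedAddCommGroup E]
    [NormedSpace ℂ E] [SMul Aᵐᵒᵖ E] [RightCStarModule A E] {x : E} :
    inner A x (0 : E) = 0 := by
  have h := inner_add_right (A := A) (x := x) (y := (0 : E)) (z := 0)
  rw [add_zero] at h
  simpa using h

theorem inner_zero_left {A E : Type*} [CStarAlgebra A] [PartialOrder A] [NormedAddCommGroup E]
    [NormedSpace ℂ E] [SMul Aᵐᵒᵖ E] [RightCStarModule A E] {x : E} :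
    inner A (0 : E) x = 0 := by
  rw [← star_inner x 0, inner_zero_right, star_zero]

theorem inner_sub_right {A E : Type*} [CStarAlgebra A] [PartialOrder A] [NormedAddCommGroup E]
    [NormedSpace ℂ E] [SMul Aᵐᵒᵖ E] [RightCStarModule A E] {x y z : E} :
    inner A x (y - z) = inner A x y - inner A x z := by
  have h := inner_add_right (A := A) (x := x) (y := y - z) (z := z)
  rw [sub_add_cancel] at h
  rw [h, add_sub_cancel_right]

theorem inner_sub_left {A E : Type*} [CStarAlgebra A] [PartialOrder A] [NormedAddCommGroup E]
    [NormedSpace ℂ E] [SMul Aᵐᵒᵖ E] [RightCStarModule A E] {x y z : E} :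
    inner A (x - y) z = inner A x z - inner A y z := by
  rw [← star_inner z (x - y), inner_sub_right, star_sub, star_inner, star_inner]

theorem inner_smul_left_complex {A E : Type*} [CStarAlgebra A] [PartialOrder A]
    [NormedAddCommGroup E] [NormedSpace ℂ E] [SMul Aᵐᵒᵖ E] [RightCStarModule A E]
    {z : ℂ} {x y : E} : inner A (z • x) y = star z • inner A x y := by
  rw [← star_inner y (z • x), inner_smul_right_complex, star_smul, star_inner]

theorem inner_op_smul_left {A E : Type*} [CStarAlgebra A] [PartialOrder A]
    [NormedAddCommGroup E] [NormedSpace ℂ E] [SMul Aᵐᵒᵖ E] [RightCStarModule A E]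
    {a : A} {x y : E} : inner A (x <• a) y = star a * inner A x y := by
  rw [← star_inner y (x <• a), inner_op_smul_right, star_mul, star_inner]

theorem norm_sq_eq {A E : Type*} [CStarAlgebra A] [PartialOrder A]
    [NormedAddCommGroup E] [NormedSpace ℂ E] [SMul Aᵐᵒᵖ E] [RightCStarModule A E]
    {x : E} : ‖x‖ ^ 2 = ‖(inner A x x : A)‖ := by
  rw [norm_eq_sqrt_norm_inner_self x, Real.sq_sqrt (norm_nonneg _)]

end RightCStarModule

variable {A : Type*} [CStarAlgebra A] [PartialOrder A] [StarOrderedRing A]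
variable {S : Type*} [Nonempty S]
variable {E : Type*} [NormedAddCommGroup E] [NormedSpace ℂ E] [SMul Aᵐᵒᵖ E]
  [RightCStarModule A E] [CompleteSpace E]

/-- let `g : S → A` and suppose `E₀ = {h | g·h = 0}` is orthogonally
complemented, with orthogonal projection `P` onto `E₀`.  Then
`E_g = {g·h : h ∈ E}` is a reproducing kernel Hilbert C*-module on `S` with inner product
`⟪g·h₁, g·h₂⟫ := ⟪h₁, h₂⟫` for `h₁, h₂ ∈ E₀ᗮ = ker P`; concretely (identifying `E_g` with
`E₀ᗮ` via `h ↦ g·h`):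
* every `g·h` equals `g·h'` for some `h' ∈ E₀ᗮ`, and this representative is unique
  (so the inner product above is well defined);
* the kernel element at `s` is `g·k_s·g(s)*`, represented by
  `k'_s = (1 - P)(k_s <• g(s)*) ∈ E₀ᗮ`: as a function, `g·k'_s = g·k_s·g(s)*`, and it
  reproduces evaluation: `(g·h)(s) = ⟪k'_s, h⟫` for `h ∈ E₀ᗮ`;
* the `A`-linear span of the kernel elements `k'_s` is dense in `E₀ᗮ ≃ E_g`;
* the reproducing kernel is `K'(s,t) = ⟪k'_s, k'_t⟫ = g(s) K(s,t) g(t)*`. -/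
theorem multiplier_range_is_rkhcm
    (R : RKHCM A S E) (g : S → A) (E₀ : Set E)
    (hE₀ : E₀ = {h : E | ∀ s, g s * R.toFun h s = 0})
    (P : E → E)
    (hPmem : ∀ f, P f ∈ E₀) (hPfix : ∀ f ∈ E₀, P f = f)
    (hPadj : ∀ f f' : E, (inner A (P f) f' : A) = inner A f (P f')) :
    (∀ h₁ h₂ : E, P h₁ = 0 → P h₂ = 0 →
      (∀ s, g s * R.toFun h₁ s = g s * R.toFun h₂ s) → h₁ = h₂) ∧
    (∀ (h : E) (s : S), g s * R.toFun h s = g s * R.toFun (h - P h) s) ∧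
    (∀ h : E, P h = 0 → ∀ s : S,
      g s * R.toFun h s =
        inner A ((R.k s <• star (g s)) - P (R.k s <• star (g s))) h) ∧
    (∀ s t : S,
      g t * R.toFun ((R.k s <• star (g s)) - P (R.k s <• star (g s))) t =
        g t * R.toFun (R.k s) t * star (g s)) ∧
    closure ((Submodule.span ℂ
        (Set.range fun p : S × A => (R.k p.1 <• p.2) - P (R.k p.1 <• p.2)) :
        Submodule ℂ E) : Set E) = {h : E | P h = 0} ∧
    (∀ s t : S,
      (inner A ((R.k s <• star (g s)) - P (R.k s <• star (g s)))
          ((R.k t <• star (g t)) - P (R.k t <• star (g t))) : A) =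
        g s * inner A (R.k s) (R.k t) * star (g t)) := by
  -- basic facts
  have hmem : ∀ f : E, f ∈ E₀ ↔ ∀ s, g s * R.toFun f s = 0 := by
    intro f; rw [hE₀]; rfl
  have hzero : ∀ x : E, (∀ f' : E, (inner A x f' : A) = 0) → x = 0 := by
    intro x hx
    have h2 : ‖x‖ ^ 2 = 0 := by rw [RightCStarModule.norm_sq_eq, hx x, norm_zero]
    have := pow_eq_zero_iff (n := 2) (by norm_num) |>.mp h2
    simpa using this
  have hext : ∀ x y : E, (∀ f' : E, (inner A x f' : A) = inner A y f') → x = y := by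
    intro x y hxy
    have : x - y = 0 := by
      refine hzero _ fun f' => ?_
      rw [RightCStarModule.inner_sub_left, hxy, sub_self]
    exact sub_eq_zero.mp this
  -- P is additive, ℂ-linear, idempotent
  have hPadd : ∀ x y : E, P (x + y) = P x + P y := by
    intro x y
    refine hext _ _ fun f' => ?_
    rw [hPadj, RightCStarModule.inner_add_left, RightCStarModule.inner_add_left, hPadj, hPadj]
  have hPsmul : ∀ (c : ℂ) (x : E), P (c • x) = c • P x := by
    intro c x
    refine hext _ _ fun f' => ?_
    rw [hPadj, RightCStarModule.inner_smul_left_complex, RightCStarModule.inner_smul_left_complex, hPadj]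
  have hP0 : P 0 = 0 := by
    refine hPfix 0 ?_
    rw [hmem]; intro s
    rw [R.eval_eq, RightCStarModule.inner_zero_right, mul_zero]
  have hPsub : ∀ x y : E, P (x - y) = P x - P y := by
    intro x y
    have := hPadd (x - y) y
    rw [sub_add_cancel] at this
    rw [eq_sub_iff_add_eq, ← this]
  have hPP : ∀ x : E, P (P x) = P x := fun x => hPfix _ (hPmem x)
  have hQ0 : ∀ x : E, P (x - P x) = 0 := by
    intro x; rw [hPsub, hPP, sub_self]
  -- toFun is "linear enough"
  have hsubFun : ∀ (x y : E) (s : S), R.toFun (x - y) s = R.toFun x s - R.toFun y s := by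
    intro x y s; rw [R.eval_eq, R.eval_eq, R.eval_eq, RightCStarModule.inner_sub_right]
  have hPkill : ∀ (x : E) (s : S), g s * R.toFun (P x) s = 0 := by
    intro x s; exact (hmem (P x)).mp (hPmem x) s
  -- part 2
  have part2 : ∀ (h : E) (s : S), g s * R.toFun h s = g s * R.toFun (h - P h) s := by
    intro h s
    rw [hsubFun, mul_sub, hPkill, sub_zero]
  -- part 3
  have part3 : ∀ h : E, P h = 0 → ∀ s : S,
      g s * R.toFun h s =
        inner A ((R.k s <• star (g s)) - P (R.k s <• star (g s))) h := by
    intro h hh s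
    rw [RightCStarModule.inner_sub_left, hPadj, hh, RightCStarModule.inner_zero_right, sub_zero,
      RightCStarModule.inner_op_smul_left, star_star, R.eval_eq]
  -- part 1
  have part1 : ∀ h₁ h₂ : E, P h₁ = 0 → P h₂ = 0 →
      (∀ s, g s * R.toFun h₁ s = g s * R.toFun h₂ s) → h₁ = h₂ := by
    intro h₁ h₂ p1 p2 hgs
    have hmem0 : (h₁ - h₂) ∈ E₀ := by
      rw [hmem]; intro s
      rw [hsubFun, mul_sub, hgs s, sub_self]
    have hfix : P (h₁ - h₂) = h₁ - h₂ := hPfix _ hmem0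
    have : h₁ - h₂ = 0 := by
      refine hzero _ fun f' => ?_
      calc (inner A (h₁ - h₂) f' : A) = inner A (P (h₁ - h₂)) f' := by rw [hfix]
        _ = inner A (h₁ - h₂) (P f') := hPadj _ _
        _ = inner A h₁ (P f') - inner A h₂ (P f') := RightCStarModule.inner_sub_left
        _ = inner A (P h₁) f' - inner A (P h₂) f' := by rw [hPadj, hPadj]
        _ = 0 := by rw [p1, p2, RightCStarModule.inner_zero_left, sub_self]
    exact sub_eq_zero.mp this
  -- part 4
  have part4 : ∀ s t : S,
      g t * R.toFun ((R.k s <• star (g s)) - P (R.k s <• star (g s))) t =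
        g t * R.toFun (R.k s) t * star (g s) := by
    intro s t
    rw [hsubFun, mul_sub, hPkill, sub_zero, R.eval_eq, RightCStarModule.inner_op_smul_right,
      ← R.eval_eq, mul_assoc]
  -- part 6
  have part6 : ∀ s t : S,
      (inner A ((R.k s <• star (g s)) - P (R.k s <• star (g s)))
          ((R.k t <• star (g t)) - P (R.k t <• star (g t))) : A) =
        g s * inner A (R.k s) (R.k t) * star (g t) := by
    intro s t
    rw [← part3 _ (hQ0 _) s]
    rw [hsubFun, mul_sub, hPkill, sub_zero, R.eval_eq, RightCStarModule.inner_op_smul_right,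
      ← R.eval_eq, mul_assoc, R.eval_eq]
  -- Continuous linear version of P
  have hPbound : ∀ x : E, ‖P x‖ ≤ 1 * ‖x‖ := by
    intro x
    rw [one_mul]
    by_cases hz : ‖P x‖ = 0
    · rw [hz]; positivity
    · have h1 : ‖P x‖ ^ 2 = ‖(inner A (P x) (P x) : A)‖ := RightCStarModule.norm_sq_eq
      have h2 : (inner A (P x) (P x) : A) = inner A x (P x) := by
        rw [hPadj, hPP]
      have h3 : ‖P x‖ ^ 2 ≤ ‖x‖ ^ 2 := by
        rw [RightCStarModule.norm_sq_eq, RightCStarModule.norm_sq_eq (x := x)]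
        have hc : (inner A (P x) (x - P x) : A) = 0 := by
          rw [hPadj, hQ0, RightCStarModule.inner_zero_right]
        have hc' : (inner A (x - P x) (P x) : A) = 0 := by
          rw [← RightCStarModule.star_inner, hc, star_zero]
        have hd : (inner A x x : A) = inner A (P x) (P x) + inner A (x - P x) (x - P x) := by
          calc (inner A x x : A) = inner A (P x + (x - P x)) (P x + (x - P x)) := by
                rw [add_sub_cancel]
            _ = _ := by
                rw [RightCStarModule.inner_add_left, RightCStarModule.inner_add_right,
                  RightCStarModule.inner_add_right, hc, hc']
                abel
        rw [hd]
        exact CStarAlgebra.norm_le_norm_of_nonneg_of_le RightCStarModule.inner_self_nonneg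
          (le_add_of_nonneg_right RightCStarModule.inner_self_nonneg)
      have h4 := h3
      have hpos : 0 < ‖P x‖ := lt_of_le_of_ne (norm_nonneg _) (Ne.symm hz)
      nlinarith [norm_nonneg x]
  let Pl : E →L[ℂ] E :=
    LinearMap.mkContinuous
      { toFun := P
        map_add' := hPadd
        map_smul' := hPsmul } 1 hPbound
  have hPl : ∀ x, Pl x = P x := fun _ => rfl
  let Ql : E →L[ℂ] E := ContinuousLinearMap.id ℂ E - Pl
  have hQl : ∀ x, Ql x = x - P x := fun _ => rfl
  -- part 5
  have part5 : closure ((Submodule.span ℂ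
        (Set.range fun p : S × A => (R.k p.1 <• p.2) - P (R.k p.1 <• p.2)) :
        Submodule ℂ E) : Set E) = {h : E | P h = 0} := by
    have hclosed : IsClosed {h : E | P h = 0} := by
      have : {h : E | P h = 0} = Pl ⁻¹' {0} := by ext h; simp [hPl]
      rw [this]
      exact isClosed_singleton.preimage Pl.continuous
    apply le_antisymm
    · apply closure_minimal _ hclosed
      intro x hx
      have hx' : x ∈ Submodule.span ℂ
          (Set.range fun p : S × A => (R.k p.1 <• p.2) - P (R.k p.1 <• p.2)) := hx
      have hle : Submodule.span ℂ
          (Set.range fun p : S × A => (R.k p.1 <• p.2) - P (R.k p.1 <• p.2)) ≤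
          LinearMap.ker (Pl : E →ₗ[ℂ] E) := by
        rw [Submodule.span_le]
        rintro _ ⟨p, rfl⟩
        simp only [SetLike.mem_coe, LinearMap.mem_ker]
        show Pl _ = 0
        rw [hPl]
        exact hQ0 _
      exact hle hx'
    · intro h hh
      have hh' : P h = 0 := hh
      have hmem1 : h ∈ closure ((Submodule.span ℂ
          (Set.range fun p : S × A => R.k p.1 <• p.2) : Submodule ℂ E) : Set E) :=
        R.dense_span h
      have himg : Ql h ∈ closure (Ql '' ((Submodule.span ℂ
          (Set.range fun p : S × A => R.k p.1 <• p.2) : Submodule ℂ E) : Set E)) :=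
        (image_closure_subset_closure_image Ql.continuous) ⟨h, hmem1, rfl⟩
      have hspan : Ql '' ((Submodule.span ℂ
          (Set.range fun p : S × A => R.k p.1 <• p.2) : Submodule ℂ E) : Set E) ⊆
          ((Submodule.span ℂ
            (Set.range fun p : S × A => (R.k p.1 <• p.2) - P (R.k p.1 <• p.2)) :
            Submodule ℂ E) : Set E) := by
        rintro _ ⟨x, hx, rfl⟩
        have : Ql x ∈ Submodule.map (Ql : E →ₗ[ℂ] E)
            (Submodule.span ℂ (Set.range fun p : S × A => R.k p.1 <• p.2)) :=
          ⟨x, hx, rfl⟩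
        rw [Submodule.map_span] at this
        refine Submodule.span_mono ?_ this
        rintro _ ⟨_, ⟨p, rfl⟩, rfl⟩
        exact ⟨p, (hQl _).symm⟩
      have := closure_mono hspan himg
      rw [hQl, hh', sub_zero] at this
      exact this
  exact ⟨part1, part2, part3, part4, part5, part6⟩
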